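/- (Exclusion lemma.) Let m ≤ n+1 and f ∈ H_d[m] with f ≠ 0, and let x, y ∈ S^n be such that 0 < d_S(x,y) ≤ √2. Then ‖f(x) − f(y)‖ < ‖f‖·√D·d_S(x,y). In particular, if f(x) ≠ 0, then f has no zero in the angular ball B_S(x, ‖f(x)‖/(‖f‖√D)) := {y ∈ S^n : d_S(y,x) < ‖f(x)‖/(‖f‖√D)}. -/

import Mathlib

open Function Metric Filter
open scoped ENNReal

noncomputable section

/-- Evaluation of a polynomial system as a map between Euclidean spaces. -/
def evalSys {n m : ℕ} (f : Fin m → MvPolynomial (Fin (n + 1)) ℝ) :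
    EuclideanSpace ℝ (Fin (n + 1)) → EuclideanSpace ℝ (Fin m) :=
  fun x => WithLp.toLp 2 (fun i => MvPolynomial.eval (fun j => x j) (f i))

/-- Moore–Penrose inverse A† = Aᵀ (A Aᵀ)⁻¹ of a (surjective) continuous linear map
between real inner product spaces. -/
def pinv {E F : Type*} [NormedAddCommGroup E] [InnerProductSpace ℝ E] [CompleteSpace E]
    [NormedAddCommGroup F] [InnerProductSpace ℝ F] [CompleteSpace F]
    (A : E →L[ℝ] F) : F →L[ℝ] E :=
  (ContinuousLinearMap.adjoint A).comp (Ring.inverse (A.comp (ContinuousLinearMap.adjoint A)))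

/-- The diagonal matrix Δ(x) with diagonal entries ‖x‖^(dᵢ−1)·√dᵢ, as a linear map ℝ^m → ℝ^m. -/
def Delta {n m : ℕ} (d : Fin m → ℕ) (x : EuclideanSpace ℝ (Fin (n + 1))) :
    EuclideanSpace ℝ (Fin m) →L[ℝ] EuclideanSpace ℝ (Fin m) :=
  LinearMap.toContinuousLinearMap
    (Matrix.toEuclideanLin (Matrix.diagonal fun i => ‖x‖ ^ (d i - 1) * Real.sqrt (d i)))

/-- Weyl norm squared of a polynomial system: Σᵢ Σ_a coeff²·(dᵢ choose a)⁻¹. -/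
def weylNormSq {n m : ℕ} (f : Fin m → MvPolynomial (Fin (n + 1)) ℝ) : ℝ :=
  ∑ i, ∑ a ∈ (f i).support, ((f i).coeff a) ^ 2 / (Nat.multinomial a.support a : ℝ)

/-- Weyl norm of a polynomial system. -/
def weylNorm {n m : ℕ} (f : Fin m → MvPolynomial (Fin (n + 1)) ℝ) : ℝ :=
  Real.sqrt (weylNormSq f)

/-- μ_norm(f,x) = ‖f‖·‖Df(x)†·Δ(x)‖ (real-valued formula, meaningful when Df(x) is surjective). -/
def munormR {n m : ℕ} (d : Fin m → ℕ) (f : Fin m → MvPolynomial (Fin (n + 1)) ℝ)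
    (x : EuclideanSpace ℝ (Fin (n + 1))) : ℝ :=
  weylNorm f * ‖(pinv (fderiv ℝ (evalSys f) x)).comp (Delta d x)‖

open Classical in
/-- μ_norm(f,x), with value ∞ when Df(x) is not surjective. -/
def munormE {n m : ℕ} (d : Fin m → ℕ) (f : Fin m → MvPolynomial (Fin (n + 1)) ℝ)
    (x : EuclideanSpace ℝ (Fin (n + 1))) : ℝ≥0∞ :=
  if Surjective ⇑(fderiv ℝ (evalSys f) x) then ENNReal.ofReal (munormR d f x) else ⊤

/-- The maximal degree D. -/
def Dmax {m : ℕ} (d : Fin m → ℕ) : ℕ := Finset.univ.sup d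

/-- The angular distance d_S(x₁,x₂) = arccos⟨x₁,x₂⟩ on the unit sphere. -/
def angDist {k : ℕ} (x₁ x₂ : EuclideanSpace ℝ (Fin k)) : ℝ :=
  Real.arccos (inner ℝ x₁ x₂)

private lemma multinomial_univ {k : ℕ} (a : Fin k →₀ ℕ) :
    Nat.multinomial Finset.univ ⇑a = Nat.multinomial a.support ⇑a := by
  unfold Nat.multinomial
  congr 1
  · congr 1
    exact (Finset.sum_subset (Finset.subset_univ _) fun i _ hi =>
      Finsupp.notMem_support_iff.mp hi).symm
  · exact (Finset.prod_subset (Finset.subset_univ _) fun i _ hi => by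
      rw [Finsupp.notMem_support_iff.mp hi]; rfl).symm

private lemma kernel_sum {k d : ℕ} (u : Fin k → ℝ) :
    ∑ c ∈ Finset.piAntidiag (Finset.univ : Finset (Fin k)) d,
      (Nat.multinomial Finset.univ c : ℝ) * ∏ j, u j ^ c j = (∑ j, u j) ^ d :=
  (Finset.sum_pow_eq_sum_piAntidiag Finset.univ u d).symm
private lemma coord_cs {k D : ℕ} (p : MvPolynomial (Fin k) ℝ) (hp : p.IsHomogeneous D)
    (g : (Fin k → ℕ) → ℝ) :
    (∑ a ∈ p.support, p.coeff a * g ⇑a) ^ 2 ≤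
      (∑ a ∈ p.support, (p.coeff a) ^ 2 / (Nat.multinomial a.support ⇑a : ℝ)) *
        ∑ c ∈ Finset.piAntidiag (Finset.univ : Finset (Fin k)) D,
          (Nat.multinomial Finset.univ c : ℝ) * (g c) ^ 2 := by
  classical
  have hCpos : ∀ a : Fin k →₀ ℕ, (0:ℝ) < (Nat.multinomial Finset.univ ⇑a : ℝ) := by
    intro a; exact_mod_cast Nat.multinomial_pos _ _
  have step1 : (∑ a ∈ p.support, p.coeff a * g ⇑a) ^ 2 ≤
      (∑ a ∈ p.support, (p.coeff a) ^ 2 / (Nat.multinomial a.support ⇑a : ℝ)) *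
        ∑ a ∈ p.support, (Nat.multinomial Finset.univ ⇑a : ℝ) * (g ⇑a) ^ 2 := by
    have := Finset.sum_mul_sq_le_sq_mul_sq p.support
      (fun a => p.coeff a / Real.sqrt (Nat.multinomial Finset.univ ⇑a))
      (fun a => Real.sqrt (Nat.multinomial Finset.univ ⇑a) * g ⇑a)
    have e1 : ∀ a ∈ p.support,
        (p.coeff a / Real.sqrt (Nat.multinomial Finset.univ ⇑a)) *
          (Real.sqrt (Nat.multinomial Finset.univ ⇑a) * g ⇑a) = p.coeff a * g ⇑a := by
      intro a _
      have hs : Real.sqrt (Nat.multinomial Finset.univ ⇑a) ≠ 0 :=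
        ne_of_gt (Real.sqrt_pos.mpr (hCpos a))
      field_simp
    have e2 : ∀ a ∈ p.support,
        (p.coeff a / Real.sqrt (Nat.multinomial Finset.univ ⇑a)) ^ 2 =
          (p.coeff a) ^ 2 / (Nat.multinomial a.support ⇑a : ℝ) := by
      intro a _
      rw [div_pow, Real.sq_sqrt (le_of_lt (hCpos a)), multinomial_univ]
    have e3 : ∀ a ∈ p.support,
        (Real.sqrt (Nat.multinomial Finset.univ ⇑a) * g ⇑a) ^ 2 =
          (Nat.multinomial Finset.univ ⇑a : ℝ) * (g ⇑a) ^ 2 := by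
      intro a _
      rw [mul_pow, Real.sq_sqrt (le_of_lt (hCpos a))]
    rw [Finset.sum_congr rfl e1, Finset.sum_congr rfl e2, Finset.sum_congr rfl e3] at this
    exact this
  refine step1.trans (mul_le_mul_of_nonneg_left ?_ ?_)
  · -- extend support sum to piAntidiag
    have himg : ∑ a ∈ p.support, (Nat.multinomial Finset.univ ⇑a : ℝ) * (g ⇑a) ^ 2 =
        ∑ c ∈ p.support.image (fun a : Fin k →₀ ℕ => ⇑a),
          (Nat.multinomial Finset.univ c : ℝ) * (g c) ^ 2 :=
      (Finset.sum_image (g := fun a : Fin k →₀ ℕ => (⇑a : Fin k → ℕ))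
        (f := fun c : Fin k → ℕ => (Nat.multinomial Finset.univ c : ℝ) * (g c) ^ 2)
        fun a _ b _ h => Finsupp.ext fun i => congrFun h i).symm
    rw [himg]
    refine Finset.sum_le_sum_of_subset_of_nonneg ?_ ?_
    · intro c hc
      simp only [Finset.mem_image] at hc
      obtain ⟨a, ha, rfl⟩ := hc
      rw [Finset.mem_piAntidiag]
      refine ⟨?_, fun i _ => Finset.mem_univ i⟩
      have hdeg := hp (MvPolynomial.mem_support_iff.mp ha)
      rw [← hdeg, show (Finsupp.weight 1 : (Fin k →₀ ℕ) →+ ℕ) = Finsupp.weight (fun _ => 1) from rfl,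
        ← Finsupp.degree_eq_weight_one, Finsupp.degree_eq_sum]
    · intro c _ _
      positivity
  · refine Finset.sum_nonneg fun a _ => ?_
    positivity
private lemma prod_sq {k : ℕ} (x : Fin k → ℝ) (c : Fin k → ℕ) :
    (∏ j, x j ^ c j) ^ 2 = ∏ j, (x j ^ 2) ^ c j := by
  rw [← Finset.prod_pow]
  exact Finset.prod_congr rfl fun j _ => by rw [← pow_mul, ← pow_mul, mul_comm]

private lemma prod_mul {k : ℕ} (x y : Fin k → ℝ) (c : Fin k → ℕ) :
    (∏ j, x j ^ c j) * (∏ j, y j ^ c j) = ∏ j, (x j * y j) ^ c j := by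
  rw [← Finset.prod_mul_distrib]
  exact Finset.prod_congr rfl fun j _ => (mul_pow _ _ _).symm

private lemma coord_bound {k D : ℕ} (p : MvPolynomial (Fin k) ℝ) (hp : p.IsHomogeneous D)
    (x y : Fin k → ℝ) (hx : ∑ j, x j ^ 2 = 1) (hy : ∑ j, y j ^ 2 = 1) :
    (MvPolynomial.eval x p - MvPolynomial.eval y p) ^ 2 ≤
      (∑ a ∈ p.support, (p.coeff a) ^ 2 / (Nat.multinomial a.support ⇑a : ℝ)) *
        (2 - 2 * (∑ j, x j * y j) ^ D) := by
  classical
  set g : (Fin k → ℕ) → ℝ := fun c => (∏ j, x j ^ c j) - ∏ j, y j ^ c j with hg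
  have hev : MvPolynomial.eval x p - MvPolynomial.eval y p =
      ∑ a ∈ p.support, p.coeff a * g ⇑a := by
    rw [MvPolynomial.eval_eq', MvPolynomial.eval_eq', ← Finset.sum_sub_distrib]
    exact Finset.sum_congr rfl fun a _ => by rw [hg]; ring
  have hker : ∑ c ∈ Finset.piAntidiag (Finset.univ : Finset (Fin k)) D,
      (Nat.multinomial Finset.univ c : ℝ) * (g c) ^ 2 =
      2 - 2 * (∑ j, x j * y j) ^ D := by
    have e1 : ∑ c ∈ Finset.piAntidiag (Finset.univ : Finset (Fin k)) D,
        (Nat.multinomial Finset.univ c : ℝ) * (g c) ^ 2 =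
        (∑ c ∈ Finset.piAntidiag (Finset.univ : Finset (Fin k)) D,
          (Nat.multinomial Finset.univ c : ℝ) * ∏ j, (x j ^ 2) ^ c j) +
        (∑ c ∈ Finset.piAntidiag (Finset.univ : Finset (Fin k)) D,
          (Nat.multinomial Finset.univ c : ℝ) * ∏ j, (y j ^ 2) ^ c j) -
        2 * ∑ c ∈ Finset.piAntidiag (Finset.univ : Finset (Fin k)) D,
          (Nat.multinomial Finset.univ c : ℝ) * ∏ j, (x j * y j) ^ c j := by
      rw [Finset.mul_sum, ← Finset.sum_add_distrib, ← Finset.sum_sub_distrib]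
      refine Finset.sum_congr rfl fun c _ => ?_
      have h1 := prod_sq x c
      have h2 := prod_sq y c
      have h3 := prod_mul x y c
      simp only [hg]
      rw [← h1, ← h2, ← h3]
      ring
    rw [e1, kernel_sum, kernel_sum, kernel_sum, hx, hy, one_pow]
    ring
  rw [hev, ← hker]
  exact coord_cs p hp g
private lemma sumsq_of_norm_one {k : ℕ} {x : EuclideanSpace ℝ (Fin k)} (hx : ‖x‖ = 1) :
    ∑ j, x j ^ 2 = 1 := by
  have h := EuclideanSpace.norm_eq x
  rw [hx] at h
  have h2 : ∑ j, x j ^ 2 = ∑ j, ‖x j‖ ^ 2 := by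
    exact Finset.sum_congr rfl fun j _ => (sq_abs (x j)).symm
  rw [h2]
  nlinarith [Real.sq_sqrt (show (0:ℝ) ≤ ∑ j, ‖x j‖ ^ 2 from Finset.sum_nonneg fun j _ => sq_nonneg _), h.symm]

private lemma inner_eq {k : ℕ} (x y : EuclideanSpace ℝ (Fin k)) :
    (inner ℝ x y : ℝ) = ∑ j, x j * y j := by
  simp [PiLp.inner_apply, RCLike.inner_apply, mul_comm]

private lemma weylNormSq_pos {n m : ℕ} {f : Fin m → MvPolynomial (Fin (n + 1)) ℝ}
    (hf0 : f ≠ 0) : 0 < weylNormSq f := by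
  obtain ⟨i, hi⟩ : ∃ i, f i ≠ 0 := by
    by_contra h
    push_neg at h
    exact hf0 (funext fun i => h i)
  have hterm : ∀ (j : Fin m), (0:ℝ) ≤ ∑ a ∈ (f j).support, ((f j).coeff a) ^ 2 / (Nat.multinomial a.support a : ℝ) := by
    intro j
    refine Finset.sum_nonneg fun a _ => ?_
    positivity
  refine Finset.sum_pos' (fun j _ => hterm j) ⟨i, Finset.mem_univ i, ?_⟩
  refine Finset.sum_pos' (fun a _ => by positivity) ?_
  obtain ⟨a, ha⟩ := (MvPolynomial.support_nonempty.mpr hi)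
  refine ⟨a, ha, ?_⟩
  have hca : (f i).coeff a ≠ 0 := MvPolynomial.mem_support_iff.mp ha
  have : (0:ℝ) < (Nat.multinomial a.support ⇑a : ℝ) := by exact_mod_cast Nat.multinomial_pos _ _
  positivity

private lemma main_ineq {n m : ℕ} {d : Fin m → ℕ} (hd : ∀ i, 1 ≤ d i)
    {f : Fin m → MvPolynomial (Fin (n + 1)) ℝ} (hf : ∀ i, (f i).IsHomogeneous (d i))
    (hf0 : f ≠ 0) {x y : EuclideanSpace ℝ (Fin (n + 1))}
    (hx : ‖x‖ = 1) (hy : ‖y‖ = 1) (h1 : 0 < angDist x y) :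
    ‖evalSys f x - evalSys f y‖ < weylNorm f * Real.sqrt (Dmax d) * angDist x y := by
  classical
  have hm0 : 0 < m := by
    rcases Nat.eq_zero_or_pos m with hm | hm
    · subst hm; exact absurd (funext fun i => i.elim0) hf0
    · exact hm
  have hD1 : (1:ℝ) ≤ (Dmax d : ℝ) := by
    have : 1 ≤ Dmax d := le_trans (hd ⟨0, hm0⟩) (Finset.le_sup (Finset.mem_univ _))
    exact_mod_cast this
  set c : ℝ := inner ℝ x y with hcdef
  have hc1 : |c| ≤ 1 := by
    simpa [hx, hy] using abs_real_inner_le_norm x y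
  have hcl : -1 ≤ c := neg_le_of_abs_le hc1
  have hcu : c ≤ 1 := le_of_abs_le hc1
  set θ : ℝ := angDist x y with hθdef
  have hcos : Real.cos θ = c := Real.cos_arccos hcl hcu
  have hθ2 : 2 - 2 * c < θ ^ 2 := by
    have := Real.one_sub_sq_div_two_lt_cos (x := θ) (ne_of_gt h1)
    rw [hcos] at this
    linarith
  have hsx : ∑ j, x j ^ 2 = 1 := sumsq_of_norm_one hx
  have hsy : ∑ j, y j ^ 2 = 1 := sumsq_of_norm_one hy
  have hcsum : ∑ j, x j * y j = c := (inner_eq x y).symm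
  set Np : Fin m → ℝ := fun i =>
    ∑ a ∈ (f i).support, ((f i).coeff a) ^ 2 / (Nat.multinomial a.support a : ℝ) with hNp
  have hNpnn : ∀ i, 0 ≤ Np i := fun i => Finset.sum_nonneg fun a _ => by positivity
  have hW : weylNormSq f = ∑ i, Np i := rfl
  have hWpos : 0 < weylNormSq f := weylNormSq_pos hf0
  -- per coordinate bound
  have hper : ∀ i : Fin m, (evalSys f x i - evalSys f y i) ^ 2 ≤
      Np i * (2 * (Dmax d : ℝ) * (1 - c)) := by
    intro i
    have h1i := coord_bound (f i) (hf i) (fun j => x j) (fun j => y j) hsx hsy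
    rw [hcsum] at h1i
    change (evalSys f x i - evalSys f y i) ^ 2 ≤ _ at h1i
    refine le_trans h1i (mul_le_mul_of_nonneg_left ?_ (hNpnn i))
    -- 2 - 2 c^(d i) ≤ 2 D (1 - c)
    have hbern : 1 + (d i : ℝ) * (c - 1) ≤ c ^ (d i) := by
      have := one_add_mul_le_pow (a := c - 1) (by linarith) (d i)
      simpa using this
    have hdD : (d i : ℝ) ≤ (Dmax d : ℝ) := by
      exact_mod_cast Finset.le_sup (f := d) (Finset.mem_univ i)
    nlinarith [hbern, hdD]
  -- sum it
  have hsum : ∑ i, (evalSys f x i - evalSys f y i) ^ 2 ≤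
      weylNormSq f * (2 * (Dmax d : ℝ) * (1 - c)) := by
    rw [hW, Finset.sum_mul]
    exact Finset.sum_le_sum fun i _ => hper i
  have hstrict : ∑ i, (evalSys f x i - evalSys f y i) ^ 2 <
      weylNormSq f * (Dmax d : ℝ) * θ ^ 2 := by
    have hWD : 0 < weylNormSq f * (Dmax d : ℝ) := by nlinarith
    nlinarith [hsum, mul_lt_mul_of_pos_left hθ2 hWD]
  -- convert to norms
  have hS : ‖evalSys f x - evalSys f y‖ =
      Real.sqrt (∑ i, (evalSys f x i - evalSys f y i) ^ 2) := by
    rw [EuclideanSpace.norm_eq]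
    congr 1
    refine Finset.sum_congr rfl fun i _ => ?_
    rw [show (evalSys f x - evalSys f y) i = evalSys f x i - evalSys f y i from rfl,
      Real.norm_eq_abs, sq_abs]
  have hRHS : weylNorm f * Real.sqrt (Dmax d) * θ =
      Real.sqrt (weylNormSq f * (Dmax d : ℝ) * θ ^ 2) := by
    rw [Real.sqrt_mul (by positivity), Real.sqrt_mul (by positivity), Real.sqrt_sq (le_of_lt h1)]
    rfl
  rw [hS, hRHS]
  exact Real.sqrt_lt_sqrt (Finset.sum_nonneg fun i _ => sq_nonneg _) hstrict

/-- (Exclusion lemma.) If 0 < d_S(x,y) ≤ √2 then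
‖f(x) − f(y)‖ < ‖f‖·√D·d_S(x,y); in particular, if f(x) ≠ 0 then f has no zero in the
ball B_S(x, ‖f(x)‖/(‖f‖√D)). -/
theorem statement9 {n m : ℕ} (hm : m ≤ n + 1) (d : Fin m → ℕ) (hd : ∀ i, 1 ≤ d i)
    (f : Fin m → MvPolynomial (Fin (n + 1)) ℝ) (hf : ∀ i, (f i).IsHomogeneous (d i))
    (hf0 : f ≠ 0)
    (x y : EuclideanSpace ℝ (Fin (n + 1)))
    (hx : x ∈ Metric.sphere (0 : EuclideanSpace ℝ (Fin (n + 1))) 1)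
    (hy : y ∈ Metric.sphere (0 : EuclideanSpace ℝ (Fin (n + 1))) 1)
    (h1 : 0 < angDist x y) (h2 : angDist x y ≤ Real.sqrt 2) :
    ‖evalSys f x - evalSys f y‖ < weylNorm f * Real.sqrt (Dmax d) * angDist x y ∧
      (evalSys f x ≠ 0 →
        ∀ z ∈ Metric.sphere (0 : EuclideanSpace ℝ (Fin (n + 1))) 1,
          angDist z x < ‖evalSys f x‖ / (weylNorm f * Real.sqrt (Dmax d)) →
            evalSys f z ≠ 0) := by
  classical
  have hx1 : ‖x‖ = 1 := mem_sphere_zero_iff_norm.mp hx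
  have hy1 : ‖y‖ = 1 := mem_sphere_zero_iff_norm.mp hy
  have hm0 : 0 < m := by
    rcases Nat.eq_zero_or_pos m with hm' | hm'
    · subst hm'; exact absurd (funext fun i => i.elim0) hf0
    · exact hm'
  have hD1 : (1:ℝ) ≤ (Dmax d : ℝ) := by
    have : 1 ≤ Dmax d := le_trans (hd ⟨0, hm0⟩) (Finset.le_sup (Finset.mem_univ _))
    exact_mod_cast this
  have hWD : 0 < weylNorm f * Real.sqrt (Dmax d) :=
    mul_pos (Real.sqrt_pos.mpr (weylNormSq_pos hf0)) (Real.sqrt_pos.mpr (by linarith))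
  refine ⟨main_ineq hd hf hf0 hx1 hy1 h1, ?_⟩
  intro hfx z hzS hz hz0
  have hz1 : ‖z‖ = 1 := mem_sphere_zero_iff_norm.mp hzS
  have hsymm : angDist z x = angDist x z := by
    unfold angDist; rw [real_inner_comm]
  rcases eq_or_lt_of_le (Real.arccos_nonneg (inner ℝ x z) : (0:ℝ) ≤ angDist x z) with h0 | hpos
  · -- z = x
    have hge : (1:ℝ) ≤ inner ℝ x z := Real.arccos_eq_zero.mp h0.symm
    have hle : (inner ℝ x z : ℝ) ≤ 1 := by
      have := real_inner_le_norm x z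
      rwa [hx1, hz1, mul_one] at this
    have hxz : x = z := (inner_eq_one_iff_of_norm_eq_one hx1 hz1).mp (le_antisymm hle hge)
    exact hfx (by rw [hxz]; exact hz0)
  · have main := main_ineq hd hf hf0 hx1 hz1 hpos
    rw [hz0, sub_zero] at main
    rw [hsymm] at hz
    have h' := (lt_div_iff₀ hWD).mp hz
    nlinarith [main, h']
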